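/- Let A ∈ ℝ^{n×n} be Hurwitz, B ∈ ℝ^{n×m}, x₀ ∈ ℝ^n, and suppose P ∈ ℝ^{n̂×n} satisfies im Pᵀ = im R(A,[B x₀]). Let F̂ ∈ ℝ^{m×n̂} be such that P A P† − P B F̂ is Hurwitz, and set F := F̂ P ∈ ℝ^{m×n}. Then A − B F is Hurwitz. -/
import Mathlib


open Matrix

/-- `A` is Hurwitz: every complex eigenvalue has negative real part. -/
def IsHurwitz {n : ℕ} (A : Matrix (Fin n) (Fin n) ℝ) : Prop :=
  ∀ μ ∈ spectrum ℂ (A.map (algebraMap ℝ ℂ)), μ.re < 0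

/-- The reachable subspace `im R(A,[B x₀])`. -/
def reachSpan {n m : ℕ} (A : Matrix (Fin n) (Fin n) ℝ) (B : Matrix (Fin n) (Fin m) ℝ)
    (x₀ : Fin n → ℝ) : Submodule ℝ (Fin n → ℝ) :=
  Submodule.span ℝ
    ({v | ∃ i < n, v = (A ^ i) *ᵥ x₀} ∪
     {v | ∃ i < n, ∃ j : Fin m, v = (A ^ i) *ᵥ (fun k => B k j)})

open Polynomial in
/-- Any power of `A` applied to `y` stays in a submodule containing the
first `n` powers applied to `y` (Cayley–Hamilton). -/
lemma pow_mulVec_mem {n : ℕ} (A : Matrix (Fin n) (Fin n) ℝ) (hn : 0 < n)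
    (W : Submodule ℝ (Fin n → ℝ)) (y : Fin n → ℝ)
    (hy : ∀ i < n, (A ^ i) *ᵥ y ∈ W) (k : ℕ) : (A ^ k) *ᵥ y ∈ W := by
  set L : Matrix (Fin n) (Fin n) ℝ →ₗ[ℝ] (Fin n → ℝ) :=
    { toFun := fun M => M *ᵥ y
      map_add' := fun M N => Matrix.add_mulVec M N y
      map_smul' := fun r M => Matrix.smul_mulVec r M y } with hLdef
  have hdeg : (X ^ k %ₘ A.charpoly).natDegree < n := by
    have h1 : A.charpoly.natDegree = n := by
      simp [A.charpoly_natDegree_eq_dim]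
    have h2 : A.charpoly ≠ 1 := by
      intro h
      have := congrArg Polynomial.natDegree h
      simp [h1] at this
      omega
    have := Polynomial.natDegree_modByMonic_lt (X ^ k) A.charpoly_monic h2
    omega
  have hrepr : A ^ k = ∑ i ∈ Finset.range n, (X ^ k %ₘ A.charpoly).coeff i • A ^ i := by
    rw [A.pow_eq_aeval_mod_charpoly k]
    exact aeval_eq_sum_range' hdeg A
  have : (A ^ k) *ᵥ y = L (A ^ k) := rfl
  rw [this, hrepr, map_sum]
  refine Submodule.sum_mem _ (fun i hi => ?_)
  have : L ((X ^ k %ₘ A.charpoly).coeff i • A ^ i)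
      = (X ^ k %ₘ A.charpoly).coeff i • ((A ^ i) *ᵥ y) := by
    rw [_root_.map_smul]; rfl
  rw [this]
  exact Submodule.smul_mem _ _ (hy i (Finset.mem_range.mp hi))

/-- `reachSpan` is invariant under `A`. -/
lemma reach_invariant {n m : ℕ} (A : Matrix (Fin n) (Fin n) ℝ) (B : Matrix (Fin n) (Fin m) ℝ)
    (x₀ : Fin n → ℝ) : ∀ s ∈ reachSpan A B x₀, A *ᵥ s ∈ reachSpan A B x₀ := by
  intro s hs
  induction hs using Submodule.span_induction with
  | mem v hv =>
    rcases hv with ⟨i, hi, rfl⟩ | ⟨i, hi, j, rfl⟩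
    · rw [Matrix.mulVec_mulVec, ← pow_succ']
      exact pow_mulVec_mem A (Nat.pos_of_ne_zero (by omega)) _ x₀
        (fun i' hi' => Submodule.subset_span (Or.inl ⟨i', hi', rfl⟩)) (i + 1)
    · rw [Matrix.mulVec_mulVec, ← pow_succ']
      exact pow_mulVec_mem A (Nat.pos_of_ne_zero (by omega)) _ _
        (fun i' hi' => Submodule.subset_span (Or.inr ⟨i', hi', j, rfl⟩)) (i + 1)
  | zero => rw [Matrix.mulVec_zero]; exact Submodule.zero_mem _
  | add x y hx hy ihx ihy => rw [Matrix.mulVec_add]; exact Submodule.add_mem _ ihx ihy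
  | smul a x hx ihx => rw [Matrix.mulVec_smul]; exact Submodule.smul_mem _ _ ihx

/-- if `A` is Hurwitz, `im Pᵀ = im R(A,[B x₀])`, and the reduced
closed-loop matrix `PAP† − PBF̂` is Hurwitz, then with `F := F̂P` the full
closed-loop matrix `A − BF` is Hurwitz. -/
theorem stmt5 {n m nh : ℕ}
    (A : Matrix (Fin n) (Fin n) ℝ) (B : Matrix (Fin n) (Fin m) ℝ) (x₀ : Fin n → ℝ)
    (hA : IsHurwitz A)
    (P : Matrix (Fin nh) (Fin n) ℝ) (Pdag : Matrix (Fin n) (Fin nh) ℝ)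
    -- `P` has full row rank and `Pdag` is its Moore–Penrose pseudo-inverse:
    (hPP : P * Pdag = 1) (hsym : (Pdag * P)ᵀ = Pdag * P)
    -- row space of `P` = reachable subspace:
    (hrange : LinearMap.range (Pᵀ.mulVecLin) = reachSpan A B x₀)
    (Fhat : Matrix (Fin m) (Fin nh) ℝ)
    (hred : IsHurwitz (P * A * Pdag - P * B * Fhat)) :
    IsHurwitz (A - B * (Fhat * P)) := by
  have mulVec_ext : ∀ {a : ℕ} (M N : Matrix (Fin n) (Fin a) ℝ),
      (∀ x, M *ᵥ x = N *ᵥ x) → M = N := by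
    intro a M N h
    ext i j
    have := congrFun (h (Pi.single j 1)) i
    simpa using this
  -- real matrix identities
  have hPQ : P * (Pdag * P) = P := by rw [← Matrix.mul_assoc, hPP, Matrix.one_mul]
  have hQQ : (Pdag * P) * (Pdag * P) = Pdag * P := by
    rw [Matrix.mul_assoc Pdag P (Pdag * P), hPQ]
  have hQPt : (Pdag * P) * Pᵀ = Pᵀ := by
    calc (Pdag * P) * Pᵀ = (Pdag * P)ᵀ * Pᵀ := by rw [hsym]
      _ = (P * (Pdag * P))ᵀ := by rw [Matrix.transpose_mul P (Pdag * P)]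
      _ = Pᵀ := by rw [hPQ]
  have hQmem : ∀ x, (Pdag * P) *ᵥ x ∈ reachSpan A B x₀ := by
    intro x
    rw [← hsym, Matrix.transpose_mul, ← Matrix.mulVec_mulVec, ← hrange]
    exact LinearMap.mem_range.mpr ⟨Pdagᵀ *ᵥ x, by rw [Matrix.mulVecLin_apply]⟩
  have hfix : ∀ s ∈ reachSpan A B x₀, (Pdag * P) *ᵥ s = s := by
    intro s hs
    rw [← hrange] at hs
    obtain ⟨u, rfl⟩ := hs
    simp only [Matrix.mulVecLin_apply, Matrix.mulVec_mulVec, hQPt]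
  have hQB : (Pdag * P) * B = B := by
    ext i j
    have hcol : (fun k => B k j) ∈ reachSpan A B x₀ :=
      Submodule.subset_span (Or.inr ⟨0, i.pos, j, by simp⟩)
    have := congrFun (hfix _ hcol) i
    simpa [Matrix.mulVec, Matrix.mul_apply, dotProduct] using this
  have hAQ : (Pdag * P) * (A * (Pdag * P)) = A * (Pdag * P) := by
    apply mulVec_ext
    intro x
    have h1 : A *ᵥ ((Pdag * P) *ᵥ x) ∈ reachSpan A B x₀ :=
      reach_invariant A B x₀ _ (hQmem x)
    calc ((Pdag * P) * (A * (Pdag * P))) *ᵥ x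
        = (Pdag * P) *ᵥ (A *ᵥ ((Pdag * P) *ᵥ x)) := by
          simp only [Matrix.mulVec_mulVec, Matrix.mul_assoc]
      _ = A *ᵥ ((Pdag * P) *ᵥ x) := hfix _ h1
      _ = (A * (Pdag * P)) *ᵥ x := Matrix.mulVec_mulVec x A (Pdag * P)
  have hQBF : (Pdag * P) * (B * (Fhat * P)) = B * (Fhat * P) := by
    rw [← Matrix.mul_assoc, hQB]
  -- complexification
  set f : ℝ →+* ℂ := algebraMap ℝ ℂ with hf
  set Ac := A.map f with hAc
  set Qc := (Pdag * P).map f with hQc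
  set Pc := P.map f with hPc
  set Pdagc := Pdag.map f with hPdagc
  set BFc := (B * (Fhat * P)).map f with hBFc
  have hQQc : Qc * Qc = Qc := by rw [hQc, ← Matrix.map_mul, hQQ]
  have hQBFc : Qc * BFc = BFc := by rw [hQc, hBFc, ← Matrix.map_mul, hQBF]
  have hAQc : Qc * (Ac * Qc) = Ac * Qc := by
    rw [hQc, hAc, ← Matrix.map_mul, ← Matrix.map_mul, hAQ]
  have hQc_eq : Qc = Pdagc * Pc := by rw [hQc, hPdagc, hPc, Matrix.map_mul]
  have hmapsub : ∀ {a b : ℕ} (M N : Matrix (Fin a) (Fin b) ℝ),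
      (M - N).map ⇑f = M.map ⇑f - N.map ⇑f := fun M N =>
    Matrix.map_sub ⇑f (fun a b => map_sub f a b) M N
  have hAclc : (A - B * (Fhat * P)).map (algebraMap ℝ ℂ) = Ac - BFc :=
    hmapsub A (B * (Fhat * P))
  -- start of the spectral argument
  intro μ hμ
  by_contra hre
  rw [spectrum.mem_iff] at hμ
  have hdet : (algebraMap ℂ (Matrix (Fin n) (Fin n) ℂ) μ
      - (A - B * (Fhat * P)).map (algebraMap ℝ ℂ)).det = 0 := by
    by_contra h
    exact hμ ((Matrix.isUnit_iff_isUnit_det _).mpr (isUnit_iff_ne_zero.mpr h))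
  obtain ⟨v, hv0, hveq⟩ := Matrix.exists_mulVec_eq_zero_iff.mpr hdet
  have hv : Ac *ᵥ v - BFc *ᵥ v = μ • v := by
    rw [Algebra.algebraMap_eq_smul_one, hAclc, Matrix.sub_mulVec, Matrix.sub_mulVec,
      Matrix.smul_mulVec, Matrix.one_mulVec, sub_eq_zero] at hveq
    exact hveq.symm
  have hQBv : ∀ u, Qc *ᵥ (BFc *ᵥ u) = BFc *ᵥ u := fun u => by
    rw [Matrix.mulVec_mulVec, hQBFc]
  have hQAQ : ∀ u, Qc *ᵥ ((Ac * Qc) *ᵥ u) = (Ac * Qc) *ᵥ u := fun u => by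
    rw [Matrix.mulVec_mulVec, hAQc]
  set w : Fin n → ℂ := v - Qc *ᵥ v with hwdef
  have hQw : Qc *ᵥ w = 0 := by
    rw [hwdef, Matrix.mulVec_sub, Matrix.mulVec_mulVec, hQQc, sub_self]
  by_cases hw : w = 0
  · -- the reachable case: `Pc *ᵥ v` is an eigenvector of the reduced closed loop
    have hQv : Qc *ᵥ v = v := by
      have := sub_eq_zero.mp hw
      exact this.symm
    have hy : Pc *ᵥ v ≠ 0 := by
      intro h
      apply hv0
      calc v = Qc *ᵥ v := hQv.symm
        _ = Pdagc *ᵥ (Pc *ᵥ v) := by rw [hQc_eq, ← Matrix.mulVec_mulVec]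
        _ = 0 := by rw [h, Matrix.mulVec_zero]
    have key : (P * A * Pdag - P * B * Fhat) * P
        = P * (A * (Pdag * P)) - P * (B * (Fhat * P)) := by
      rw [Matrix.sub_mul, Matrix.mul_assoc (P * A) Pdag P, Matrix.mul_assoc P A (Pdag * P),
        Matrix.mul_assoc (P * B) Fhat P, Matrix.mul_assoc P B (Fhat * P)]
    have hAh : (P * A * Pdag - P * B * Fhat).map (algebraMap ℝ ℂ) *ᵥ (Pc *ᵥ v)
        = μ • (Pc *ᵥ v) := by
      calc (P * A * Pdag - P * B * Fhat).map (algebraMap ℝ ℂ) *ᵥ (Pc *ᵥ v)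
          = ((P * A * Pdag - P * B * Fhat).map ⇑f * Pc) *ᵥ v :=
            Matrix.mulVec_mulVec v _ Pc
        _ = ((P * (A * (Pdag * P))).map ⇑f - (P * (B * (Fhat * P))).map ⇑f) *ᵥ v := by
            rw [hPc, ← Matrix.map_mul, key, hmapsub]
        _ = (Pc * (Ac * Qc)) *ᵥ v - (Pc * BFc) *ᵥ v := by
            rw [Matrix.sub_mulVec, Matrix.map_mul (L := P) (M := A * (Pdag * P)),
              Matrix.map_mul (L := A) (M := Pdag * P),
              Matrix.map_mul (L := P) (M := B * (Fhat * P))]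
        _ = Pc *ᵥ ((Ac * Qc) *ᵥ v) - Pc *ᵥ (BFc *ᵥ v) := by
            rw [← Matrix.mulVec_mulVec v Pc (Ac * Qc), ← Matrix.mulVec_mulVec v Pc BFc]
        _ = Pc *ᵥ (Ac *ᵥ v) - Pc *ᵥ (BFc *ᵥ v) := by
            rw [← Matrix.mulVec_mulVec v Ac Qc, hQv]
        _ = Pc *ᵥ (Ac *ᵥ v - BFc *ᵥ v) := (Matrix.mulVec_sub Pc _ _).symm
        _ = μ • (Pc *ᵥ v) := by rw [hv, Matrix.mulVec_smul]
    apply hre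
    apply hred μ
    rw [spectrum.mem_iff]
    intro hunit
    have hdet2 := (isUnit_iff_ne_zero).mp ((Matrix.isUnit_iff_isUnit_det _).mp hunit)
    apply hdet2
    apply Matrix.exists_mulVec_eq_zero_iff.mp
    refine ⟨Pc *ᵥ v, hy, ?_⟩
    rw [Algebra.algebraMap_eq_smul_one, Matrix.sub_mulVec, Matrix.smul_mulVec,
      Matrix.one_mulVec, hAh, sub_self]
  · -- the unreachable case: contradiction with `A` Hurwitz via the resolvent
    have hμA : μ ∉ spectrum ℂ Ac := fun h => hre (hA μ h)
    have hS : IsUnit (μ • (1 : Matrix (Fin n) (Fin n) ℂ) - Ac) := by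
      have := spectrum.notMem_iff.mp hμA
      rwa [Algebra.algebraMap_eq_smul_one] at this
    set S : Matrix (Fin n) (Fin n) ℂ := μ • (1 : Matrix (Fin n) (Fin n) ℂ) - Ac with hSdef
    have hSinj : Function.Injective S.mulVec := Matrix.mulVec_injective_iff_isUnit.mpr hS
    have Sv : ∀ x, S *ᵥ x = μ • x - Ac *ᵥ x := fun x => by
      rw [hSdef, Matrix.sub_mulVec, Matrix.smul_mulVec, Matrix.one_mulVec]
    set V : Submodule ℂ (Fin n → ℂ) := LinearMap.range Qc.mulVecLin with hVdef
    have hSV : ∀ x ∈ V, S.mulVecLin x ∈ V := by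
      rintro x ⟨z, rfl⟩
      refine ⟨μ • z - (Ac * Qc) *ᵥ z, ?_⟩
      simp only [Matrix.mulVecLin_apply]
      rw [Matrix.mulVec_sub, Matrix.mulVec_smul, hQAQ z, Sv,
        Matrix.mulVec_mulVec z Ac Qc]
    set e : V →ₗ[ℂ] V := S.mulVecLin.restrict hSV with hedef
    have einj : Function.Injective e := by
      intro a b hab
      apply Subtype.ext
      apply hSinj
      have := congrArg Subtype.val hab
      simpa [hedef, LinearMap.restrict_apply, Matrix.mulVecLin_apply] using this
    have esurj : Function.Surjective e := LinearMap.injective_iff_surjective.mp einj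
    -- the key membership : S *ᵥ w ∈ V
    have h1 : Ac *ᵥ w = Ac *ᵥ v - (Ac * Qc) *ᵥ v := by
      rw [hwdef, Matrix.mulVec_sub, Matrix.mulVec_mulVec]
    have h2 : Qc *ᵥ (Ac *ᵥ w) = Qc *ᵥ (Ac *ᵥ v) - (Ac * Qc) *ᵥ v := by
      rw [h1, Matrix.mulVec_sub, hQAQ v]
    have h3 : μ • w = Ac *ᵥ v - Qc *ᵥ (Ac *ᵥ v) := by
      rw [hwdef, smul_sub, ← Matrix.mulVec_smul, ← hv, Matrix.mulVec_sub, hQBv v]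
      abel
    have hmu_w : μ • w = Ac *ᵥ w - Qc *ᵥ (Ac *ᵥ w) := by
      rw [h3, h2, h1]
      abel
    have hSwV : S *ᵥ w ∈ V := by
      refine ⟨-(Ac *ᵥ w), ?_⟩
      simp only [Matrix.mulVecLin_apply]
      rw [Matrix.mulVec_neg, Sv, hmu_w]
      abel
    obtain ⟨u, hu⟩ := esurj ⟨S *ᵥ w, hSwV⟩
    have hval : S *ᵥ (u : Fin n → ℂ) = S *ᵥ w := by
      have := congrArg Subtype.val hu
      simpa [hedef, LinearMap.restrict_apply, Matrix.mulVecLin_apply] using this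
    have huw : (u : Fin n → ℂ) = w := hSinj hval
    obtain ⟨z, hz⟩ := u.2
    apply hw
    have hQww : Qc *ᵥ w = w := by
      have hwz : w = Qc *ᵥ z := by
        rw [← huw, ← hz]
        simp [Matrix.mulVecLin_apply]
      rw [hwz, Matrix.mulVec_mulVec, hQQc]
    rw [← hQww, hQw]
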